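/- Let 0<q₁<1, let β>0, μ>0 and η>−1 be real parameters, let f,g,h : [0,∞)→ℝ be continuous pairwise synchronous functions on [0,∞) with h nonnegative, and let u : [0,∞)→[0,∞) be continuous. Then for all t>0 and all ρ ≥ 0: I_{q₁}^{η,μ,β}{u·f·g·h}(t) + h(ρ)·I_{q₁}^{η,μ,β}{u·f·g}(t) + f(ρ)g(ρ)·I_{q₁}^{η,μ,β}{u·h}(t) + f(ρ)g(ρ)h(ρ)·I_{q₁}^{η,μ,β}{u}(t) ≥ g(ρ)·I_{q₁}^{η,μ,β}{u·f·h}(t) + g(ρ)h(ρ)·I_{q₁}^{η,μ,β}{u·f}(t) + f(ρ)·I_{q₁}^{η,μ,β}{u·g·h}(t) + f(ρ)h(ρ)·I_{q₁}^{η,μ,β}{u·g}(t). -/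

import Mathlib

open scoped BigOperators

/-- The q-shifted factorial (a;q)_k = prod_{j<k} (1 - a q^j). -/
noncomputable def qPoch (q a : ℝ) (k : ℕ) : ℝ :=
  ∏ j ∈ Finset.range k, (1 - a * q ^ j)

/-- Generalized Erdélyi–Kober fractional q-integral
    I_q^{η,μ,β}{f}(t) = β(1-q^{1/β})(1-q)^{μ-1} ∑_k ((q^μ;q)_k/(q;q)_k) q^{k(η+1)} f(t q^{k/β}). -/
noncomputable def EK (q η μ β : ℝ) (f : ℝ → ℝ) (t : ℝ) : ℝ :=
  β * (1 - q ^ (1 / β)) * (1 - q) ^ (μ - 1) *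
    ∑' k : ℕ, qPoch q (q ^ μ) k / qPoch q q k * q ^ ((k : ℝ) * (η + 1)) * f (t * q ^ ((k : ℝ) / β))

def Synchronous (f g : ℝ → ℝ) : Prop :=
  ∀ x y : ℝ, 0 ≤ x → 0 ≤ y → 0 ≤ (f x - f y) * (g x - g y)

def Asynchronous (f g : ℝ → ℝ) : Prop :=
  ∀ x y : ℝ, 0 ≤ x → 0 ≤ y → (f x - f y) * (g x - g y) ≤ 0

lemma qPoch_pos {q a : ℝ} (hq0 : 0 ≤ q) (hq1 : q ≤ 1) (ha0 : 0 ≤ a) (ha1 : a < 1) (k : ℕ) :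
    0 < qPoch q a k := by
  unfold qPoch
  apply Finset.prod_pos
  intro j _
  have h1 : q ^ j ≤ 1 := pow_le_one₀ hq0 hq1
  have h2 : a * q ^ j ≤ a * 1 := mul_le_mul_of_nonneg_left h1 ha0
  linarith

/-- The coefficient of the Erdélyi–Kober series. -/
noncomputable def ekC (q μ η : ℝ) (k : ℕ) : ℝ :=
  qPoch q (q ^ μ) k / qPoch q q k * q ^ ((k : ℝ) * (η + 1))

lemma ekC_pos {q μ η : ℝ} (hq : 0 < q) (hq1 : q < 1) (hμ : 0 < μ) (k : ℕ) :
    0 < ekC q μ η k := by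
  have hA0 : 0 < q ^ μ := Real.rpow_pos_of_pos hq μ
  have hA1 : q ^ μ < 1 := Real.rpow_lt_one hq.le hq1 hμ
  exact mul_pos (div_pos (qPoch_pos hq.le hq1.le hA0.le hA1 k)
    (qPoch_pos hq.le hq1.le hq.le hq1 k)) (Real.rpow_pos_of_pos hq _)

lemma ekC_summable {q μ η : ℝ} (hq : 0 < q) (hq1 : q < 1) (hμ : 0 < μ) (hη : -1 < η) :
    Summable (ekC q μ η) := by
  have hA0 : 0 < q ^ μ := Real.rpow_pos_of_pos hq μ
  have hA1 : q ^ μ < 1 := Real.rpow_lt_one hq.le hq1 hμ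
  have hcpos : ∀ k, 0 < ekC q μ η k := ekC_pos hq hq1 hμ
  have hr1 : q ^ (η + 1) < 1 := Real.rpow_lt_one hq.le hq1 (by linarith)
  have hratio : ∀ n : ℕ, ‖ekC q μ η (n + 1)‖ / ‖ekC q μ η n‖
      = (1 - q ^ μ * q ^ n) / (1 - q * q ^ n) * q ^ (η + 1) := by
    intro n
    rw [Real.norm_of_nonneg (hcpos _).le, Real.norm_of_nonneg (hcpos _).le]
    have e1 : qPoch q (q ^ μ) (n + 1) = qPoch q (q ^ μ) n * (1 - q ^ μ * q ^ n) :=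
      Finset.prod_range_succ _ n
    have e2 : qPoch q q (n + 1) = qPoch q q n * (1 - q * q ^ n) :=
      Finset.prod_range_succ _ n
    have e3 : q ^ ((((n : ℕ) + 1 : ℕ) : ℝ) * (η + 1)) = q ^ ((n : ℝ) * (η + 1)) * q ^ (η + 1) := by
      rw [show ((((n : ℕ) + 1 : ℕ) : ℝ)) * (η + 1) = (n : ℝ) * (η + 1) + (η + 1) by
        push_cast; ring, Real.rpow_add hq]
    have hp1 : qPoch q (q ^ μ) n ≠ 0 := (qPoch_pos hq.le hq1.le hA0.le hA1 n).ne'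
    have hp2 : qPoch q q n ≠ 0 := (qPoch_pos hq.le hq1.le hq.le hq1 n).ne'
    have hp3 : (1 - q * q ^ n) ≠ 0 := by
      have h1 : q ^ n ≤ 1 := pow_le_one₀ hq.le hq1.le
      nlinarith
    have hp4 : q ^ ((n : ℝ) * (η + 1)) ≠ 0 := (Real.rpow_pos_of_pos hq _).ne'
    unfold ekC
    rw [e1, e2, e3]
    field_simp
  have h0 : Filter.Tendsto (fun n : ℕ => q ^ n) Filter.atTop (nhds 0) :=
    tendsto_pow_atTop_nhds_zero_of_lt_one hq.le hq1
  have htend : Filter.Tendsto (fun n : ℕ => (1 - q ^ μ * q ^ n) / (1 - q * q ^ n) * q ^ (η + 1))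
      Filter.atTop (nhds (q ^ (η + 1))) := by
    have hnum : Filter.Tendsto (fun n : ℕ => 1 - q ^ μ * q ^ n) Filter.atTop (nhds 1) := by
      simpa using tendsto_const_nhds.sub (h0.const_mul (q ^ μ))
    have hden : Filter.Tendsto (fun n : ℕ => 1 - q * q ^ n) Filter.atTop (nhds 1) := by
      simpa using tendsto_const_nhds.sub (h0.const_mul q)
    have := (hnum.div hden one_ne_zero).mul_const (q ^ (η + 1))
    simpa [Pi.div_def] using this
  exact summable_of_ratio_test_tendsto_lt_one hr1
    (Filter.Eventually.of_forall fun n => (hcpos n).ne')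
    (htend.congr fun n => (hratio n).symm)

set_option maxHeartbeats 2000000 in
theorem thm12
    (q₁ β μ η : ℝ)
    (hq₁ : 0 < q₁) (hq₁' : q₁ < 1)
    (hβ : 0 < β) (hμ : 0 < μ) (hη : -1 < η)
    (f g h u : ℝ → ℝ)
    (hcf : ContinuousOn f (Set.Ici 0))
    (hcg : ContinuousOn g (Set.Ici 0))
    (hch : ContinuousOn h (Set.Ici 0))
    (hcu : ContinuousOn u (Set.Ici 0))
    (hfg : Synchronous f g) (hfh : Synchronous f h) (hgh : Synchronous g h)
    (hh0 : ∀ x : ℝ, 0 ≤ x → 0 ≤ h x)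
    (hu0 : ∀ x : ℝ, 0 ≤ x → 0 ≤ u x)
    (t : ℝ) (ht : 0 < t) (ρ : ℝ) (hρ : 0 ≤ ρ) :
    EK q₁ η μ β (fun s => u s * f s * g s * h s) t + h ρ * EK q₁ η μ β (fun s => u s * f s * g s) t +
      f ρ * g ρ * EK q₁ η μ β (fun s => u s * h s) t + f ρ * g ρ * h ρ * EK q₁ η μ β u t ≥
      g ρ * EK q₁ η μ β (fun s => u s * f s * h s) t + g ρ * h ρ * EK q₁ η μ β (fun s => u s * f s) t +
      f ρ * EK q₁ η μ β (fun s => u s * g s * h s) t + f ρ * h ρ * EK q₁ η μ β (fun s => u s * g s) t := by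
  set P : ℝ := β * (1 - q₁ ^ (1 / β)) * (1 - q₁) ^ (μ - 1) with hPdef
  set c : ℕ → ℝ := ekC q₁ μ η with hcdef
  set sp : ℕ → ℝ := fun k : ℕ => t * q₁ ^ ((k : ℝ) / β) with hspdef
  have hEK : ∀ v : ℝ → ℝ, EK q₁ η μ β v t = P * ∑' k : ℕ, c k * v (sp k) := fun v => rfl
  have hP : 0 < P := by
    have h1 : q₁ ^ (1 / β) < 1 := Real.rpow_lt_one hq₁.le hq₁' (by positivity)
    have h2 : (0:ℝ) < (1 - q₁) ^ (μ - 1) := Real.rpow_pos_of_pos (by linarith) _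
    have : (0:ℝ) < β * (1 - q₁ ^ (1 / β)) := mul_pos hβ (by linarith)
    rw [hPdef]; positivity
  have hcpos : ∀ k, 0 < c k := ekC_pos hq₁ hq₁' hμ
  have hcsum : Summable c := ekC_summable hq₁ hq₁' hμ hη
  have hspmem : ∀ k : ℕ, sp k ∈ Set.Icc (0:ℝ) t := by
    intro k
    constructor
    · have := Real.rpow_pos_of_pos hq₁ ((k : ℝ) / β)
      simp only [hspdef]
      positivity
    · simp only [hspdef]
      exact mul_le_of_le_one_right ht.le
        (Real.rpow_le_one hq₁.le hq₁'.le (by positivity))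
  have hsp0 : ∀ k, (0:ℝ) ≤ sp k := fun k => (hspmem k).1
  have hsum : ∀ v : ℝ → ℝ, ContinuousOn v (Set.Ici 0) →
      Summable (fun k => c k * v (sp k)) := by
    intro v hv
    obtain ⟨M, hM⟩ := (isCompact_Icc : IsCompact (Set.Icc (0:ℝ) t)).exists_bound_of_continuousOn
      (hv.mono (fun x hx => hx.1))
    refine Summable.of_norm_bounded (hcsum.mul_right M) ?_
    intro k
    rw [norm_mul, Real.norm_of_nonneg (hcpos k).le]
    exact mul_le_mul_of_nonneg_left (hM _ (hspmem k)) (hcpos k).le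
  have h1 : Summable (fun k => c k * (u (sp k) * f (sp k) * g (sp k) * h (sp k))) :=
    hsum _ (((hcu.mul hcf).mul hcg).mul hch)
  have h2 : Summable (fun k => c k * (u (sp k) * f (sp k) * g (sp k))) :=
    hsum _ ((hcu.mul hcf).mul hcg)
  have h3 : Summable (fun k => c k * (u (sp k) * h (sp k))) := hsum _ (hcu.mul hch)
  have h4 : Summable (fun k => c k * u (sp k)) := hsum _ hcu
  have h5 : Summable (fun k => c k * (u (sp k) * f (sp k) * h (sp k))) :=
    hsum _ ((hcu.mul hcf).mul hch)
  have h6 : Summable (fun k => c k * (u (sp k) * f (sp k))) := hsum _ (hcu.mul hcf)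
  have h7 : Summable (fun k => c k * (u (sp k) * g (sp k) * h (sp k))) :=
    hsum _ ((hcu.mul hcg).mul hch)
  have h8 : Summable (fun k => c k * (u (sp k) * g (sp k))) := hsum _ (hcu.mul hcg)
  have hS0 : (0:ℝ) ≤ ∑' k : ℕ, c k *
      (u (sp k) * ((f (sp k) - f ρ) * (g (sp k) - g ρ) * (h (sp k) + h ρ))) := by
    refine tsum_nonneg fun k => ?_
    refine mul_nonneg (hcpos k).le (mul_nonneg (hu0 _ (hsp0 k)) ?_)
    exact mul_nonneg (hfg _ _ (hsp0 k) hρ) (add_nonneg (hh0 _ (hsp0 k)) (hh0 _ hρ))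
  have hptwise : ∀ k : ℕ, c k *
      (u (sp k) * ((f (sp k) - f ρ) * (g (sp k) - g ρ) * (h (sp k) + h ρ)))
      = (c k * (u (sp k) * f (sp k) * g (sp k) * h (sp k))
          + h ρ * (c k * (u (sp k) * f (sp k) * g (sp k)))
          + f ρ * g ρ * (c k * (u (sp k) * h (sp k)))
          + f ρ * g ρ * h ρ * (c k * u (sp k)))
        - (g ρ * (c k * (u (sp k) * f (sp k) * h (sp k)))
          + g ρ * h ρ * (c k * (u (sp k) * f (sp k)))
          + f ρ * (c k * (u (sp k) * g (sp k) * h (sp k)))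
          + f ρ * h ρ * (c k * (u (sp k) * g (sp k)))) := fun k => by ring
  have h2' := h2.mul_left (h ρ)
  have h3' := h3.mul_left (f ρ * g ρ)
  have h4' := h4.mul_left (f ρ * g ρ * h ρ)
  have h5' := h5.mul_left (g ρ)
  have h6' := h6.mul_left (g ρ * h ρ)
  have h7' := h7.mul_left (f ρ)
  have h8' := h8.mul_left (f ρ * h ρ)
  have hdecomp : (∑' k : ℕ, c k *
      (u (sp k) * ((f (sp k) - f ρ) * (g (sp k) - g ρ) * (h (sp k) + h ρ))))
      = ((∑' k : ℕ, c k * (u (sp k) * f (sp k) * g (sp k) * h (sp k)))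
          + h ρ * (∑' k : ℕ, c k * (u (sp k) * f (sp k) * g (sp k)))
          + f ρ * g ρ * (∑' k : ℕ, c k * (u (sp k) * h (sp k)))
          + f ρ * g ρ * h ρ * (∑' k : ℕ, c k * u (sp k)))
        - (g ρ * (∑' k : ℕ, c k * (u (sp k) * f (sp k) * h (sp k)))
          + g ρ * h ρ * (∑' k : ℕ, c k * (u (sp k) * f (sp k)))
          + f ρ * (∑' k : ℕ, c k * (u (sp k) * g (sp k) * h (sp k)))
          + f ρ * h ρ * (∑' k : ℕ, c k * (u (sp k) * g (sp k)))) := by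
    rw [tsum_congr hptwise,
      Summable.tsum_sub (((h1.add h2').add h3').add h4') (((h5'.add h6').add h7').add h8'),
      Summable.tsum_add ((h1.add h2').add h3') h4', Summable.tsum_add (h1.add h2') h3', Summable.tsum_add h1 h2',
      Summable.tsum_add ((h5'.add h6').add h7') h8', Summable.tsum_add (h5'.add h6') h7', Summable.tsum_add h5' h6',
      tsum_mul_left, tsum_mul_left, tsum_mul_left, tsum_mul_left, tsum_mul_left,
      tsum_mul_left, tsum_mul_left]
  simp only [hEK]
  rw [ge_iff_le, ← sub_nonneg]
  refine le_trans (mul_nonneg hP.le hS0) (le_of_eq ?_)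
  rw [hdecomp]
  ring
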